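/- arXiv:1304.0985 — 3 statements merged into one kernel-verified Lean document; each statement's English description precedes it below -/
import Mathlib

section
/- Let μ : (0,∞) → [0,∞) be nonnull, nonincreasing, continuous, and integrable. Then for every real λ, the Fourier transform μ̂(λ) = ∫₀^∞ μ(s)e^{−iλs} ds is nonzero. -/
open MeasureTheory Complex Set Real Filter

namespace Stmt6Aux

lemma sin_nonneg_shift (k : ℕ) {x : ℝ} (h1 : 2*k*π ≤ x) (h2 : x ≤ 2*k*π + π) :
    0 ≤ Real.sin x := by
  rw [← Real.sin_sub_nat_mul_two_pi x k]
  exact Real.sin_nonneg_of_nonneg_of_le_pi (by nlinarith) (by nlinarith)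

lemma sin_pos_shift (k : ℕ) {x : ℝ} (h1 : 2*k*π < x) (h2 : x < 2*k*π + π) :
    0 < Real.sin x := by
  rw [← Real.sin_sub_nat_mul_two_pi x k]
  exact Real.sin_pos_of_pos_of_lt_pi (by nlinarith) (by nlinarith)

lemma integral_pos_of_point {f : ℝ → ℝ} {s : Set ℝ} (hms : MeasurableSet s)
    (hfi : IntegrableOn f s) (hnn : ∀ x ∈ s, 0 ≤ f x)
    {u : ℝ} (hu : ContinuousAt f u) (hfu : 0 < f u) (hs : s ∈ nhds u) :
    0 < ∫ x in s, f x := by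
  rw [setIntegral_pos_iff_support_of_nonneg_ae
    (Filter.eventually_of_mem (self_mem_ae_restrict hms) hnn) hfi]
  have h1 : ∀ᶠ x in nhds u, 0 < f x := hu.eventually (eventually_gt_nhds hfu)
  exact Measure.measure_pos_of_mem_nhds _
    (Filter.inter_mem (h1.mono fun x hx => Function.mem_support.2 (ne_of_gt hx)) hs)

section Main

variable {μ : ℝ → ℝ} {lam : ℝ}

/-- integrability of `μ * sin` on subsets of `Ioi 0`. -/
lemma G_integrableOn (hμint : IntegrableOn μ (Set.Ioi 0))
    {s : Set ℝ} (hs : s ⊆ Set.Ioi 0) :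
    IntegrableOn (fun t => μ t * Real.sin (lam * t)) s := by
  have h1 : IntegrableOn μ s := hμint.mono_set hs
  refine Integrable.mono' h1.abs
    (h1.1.mul ((Real.continuous_sin.comp (continuous_const.mul continuous_id)).aestronglyMeasurable))
    ?_
  filter_upwards with x
  rw [norm_mul, Real.norm_eq_abs, Real.norm_eq_abs]
  calc |μ x| * |Real.sin (lam * x)| ≤ |μ x| * 1 :=
        mul_le_mul_of_nonneg_left (Real.abs_sin_le_one _) (abs_nonneg _)
    _ = |μ x| := mul_one _

lemma μ_intervalIntegrable (hμint : IntegrableOn μ (Set.Ioi 0))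
    {a b : ℝ} (ha : 0 ≤ a) (hab : a ≤ b) : IntervalIntegrable μ volume a b := by
  rw [intervalIntegrable_iff_integrableOn_Ioc_of_le hab]
  exact hμint.mono_set fun x hx => ha.trans_lt hx.1

lemma μ_shift_intervalIntegrable (hμint : IntegrableOn μ (Set.Ioi 0))
    {a b T : ℝ} (ha : 0 ≤ a) (hab : a ≤ b) (hT : 0 ≤ T) :
    IntervalIntegrable (fun t => μ (t + T)) volume a b := by
  have h := (μ_intervalIntegrable hμint (by linarith : (0:ℝ) ≤ a + T)
    (by linarith : a + T ≤ b + T)).comp_add_right T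
  simpa using h

lemma Gsin_intervalIntegrable (hμint : IntegrableOn μ (Set.Ioi 0))
    {a b : ℝ} (ha : 0 ≤ a) (hab : a ≤ b) :
    IntervalIntegrable (fun t => μ t * Real.sin (lam * t)) volume a b :=
  (μ_intervalIntegrable hμint ha hab).mul_continuousOn
    (Real.continuous_sin.comp (continuous_const.mul continuous_id)).continuousOn

lemma h_intervalIntegrable (hμint : IntegrableOn μ (Set.Ioi 0))
    {a b T : ℝ} (ha : 0 ≤ a) (hab : a ≤ b) (hT : 0 ≤ T) :
    IntervalIntegrable (fun t => (μ t - μ (t + T)) * Real.sin (lam * t)) volume a b :=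
  ((μ_intervalIntegrable hμint ha hab).sub
    (μ_shift_intervalIntegrable hμint ha hab hT)).mul_continuousOn
    (Real.continuous_sin.comp (continuous_const.mul continuous_id)).continuousOn

variable (hlam : 0 < lam)

section WithT

variable (hμnn : ∀ s, 0 < s → 0 ≤ μ s) (hμdec : AntitoneOn μ (Set.Ioi 0))
    (hμcont : ContinuousOn μ (Set.Ioi 0)) (hμint : IntegrableOn μ (Set.Ioi 0))

lemma lamT (hlam : 0 < lam) : lam * (π / lam) = π := by field_simp

/-- the pair identity -/
lemma pair_eq (hμint : IntegrableOn μ (Set.Ioi 0)) (hlam : 0 < lam) (k : ℕ) :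
    (∫ t in (2*k*(π/lam))..(2*k*(π/lam) + 2*(π/lam)), μ t * Real.sin (lam * t))
      = ∫ t in (2*k*(π/lam))..(2*k*(π/lam) + (π/lam)),
          (μ t - μ (t + π/lam)) * Real.sin (lam * t) := by
  set T := π / lam with hTdef
  have hT : 0 < T := div_pos Real.pi_pos hlam
  have ha : (0:ℝ) ≤ 2*k*T := by positivity
  have h1 : (∫ t in (2*k*T + T)..(2*k*T + 2*T), μ t * Real.sin (lam * t))
      = ∫ t in (2*k*T)..(2*k*T + T), μ (t + T) * Real.sin (lam * (t + T)) := by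
    rw [intervalIntegral.integral_comp_add_right (fun t => μ t * Real.sin (lam * t)) T]
    congr 1
    ring
  have h2 : ∀ t : ℝ, Real.sin (lam * (t + T)) = - Real.sin (lam * t) := by
    intro t
    rw [show lam * (t + T) = lam * t + π by rw [mul_add, lamT hlam]]
    exact Real.sin_add_pi _
  have hI1 : IntervalIntegrable (fun t => μ t * Real.sin (lam * t)) volume
      (2*k*T) (2*k*T + T) := Gsin_intervalIntegrable hμint ha (by linarith)
  have hI2 : IntervalIntegrable (fun t => μ t * Real.sin (lam * t)) volume
      (2*k*T + T) (2*k*T + 2*T) := Gsin_intervalIntegrable hμint (by linarith) (by linarith)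
  have hsplit := intervalIntegral.integral_add_adjacent_intervals hI1 hI2
  rw [← hsplit, h1]
  have h3 : (∫ t in (2*k*T)..(2*k*T + T), μ (t + T) * Real.sin (lam * (t + T)))
      = - ∫ t in (2*k*T)..(2*k*T + T), μ (t + T) * Real.sin (lam * t) := by
    rw [← intervalIntegral.integral_neg]
    apply intervalIntegral.integral_congr
    intro t _
    simp only
    rw [h2 t]; ring
  have hI3 : IntervalIntegrable (fun t => μ (t + T) * Real.sin (lam * t)) volume
      (2*k*T) (2*k*T + T) :=
    (μ_shift_intervalIntegrable hμint ha (by linarith) hT.le).mul_continuousOn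
      (Real.continuous_sin.comp (continuous_const.mul continuous_id)).continuousOn
  have h4 := intervalIntegral.integral_sub hI1 hI3
  have h5 : (∫ t in (2*k*T)..(2*k*T + T), (μ t - μ (t + T)) * Real.sin (lam * t))
      = ∫ t in (2*k*T)..(2*k*T + T),
          (μ t * Real.sin (lam * t) - μ (t + T) * Real.sin (lam * t)) := by
    apply intervalIntegral.integral_congr
    intro t _
    simp only
    ring
  rw [h3, h5, h4]
  ring

lemma h_nonneg_on (hμnn : ∀ s, 0 < s → 0 ≤ μ s) (hμdec : AntitoneOn μ (Set.Ioi 0))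
    (hlam : 0 < lam) (k : ℕ) {u : ℝ}
    (h1 : 2*k*(π/lam) ≤ u) (h2 : u ≤ 2*k*(π/lam) + (π/lam)) :
    0 ≤ (μ u - μ (u + π/lam)) * Real.sin (lam * u) := by
  set T := π / lam with hTdef
  have hT : 0 < T := div_pos Real.pi_pos hlam
  have hlT : lam * T = π := lamT hlam
  have hsin : 0 ≤ Real.sin (lam * u) := by
    refine sin_nonneg_shift k ?_ ?_
    · calc 2*(k:ℝ)*π = lam * (2*k*T) := by rw [show lam * (2*(k:ℝ)*T) = 2*k*(lam*T) by ring, hlT]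
        _ ≤ lam * u := by nlinarith
    · calc lam * u ≤ lam * (2*k*T + T) := by nlinarith
        _ = 2*k*π + π := by rw [mul_add, hlT, show lam * (2*(k:ℝ)*T) = 2*k*(lam*T) by ring, hlT]
  rcases eq_or_lt_of_le (le_trans (by positivity : (0:ℝ) ≤ 2*k*T) h1) with h0 | h0
  · rw [← h0]
    have : Real.sin (lam * 0) = 0 := by simp
    rw [this, mul_zero]
  · have hu1 : u ∈ Set.Ioi (0:ℝ) := h0
    have hu2 : u + T ∈ Set.Ioi (0:ℝ) := by simp only [Set.mem_Ioi]; linarith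
    have := hμdec hu1 hu2 (by linarith)
    exact mul_nonneg (by linarith) hsin

lemma fin_nonneg (hμnn : ∀ s, 0 < s → 0 ≤ μ s) (hμdec : AntitoneOn μ (Set.Ioi 0))
    (hμint : IntegrableOn μ (Set.Ioi 0)) (hlam : 0 < lam) (M : ℕ) :
    0 ≤ ∫ t in (0:ℝ)..(2*M*(π/lam)), μ t * Real.sin (lam * t) := by
  set T := π / lam with hTdef
  have hT : 0 < T := div_pos Real.pi_pos hlam
  induction M with
  | zero => simp
  | succ M ih =>
    have hend : 2*((M:ℝ)+1)*T = 2*M*T + 2*T := by ring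
    have hadj := intervalIntegral.integral_add_adjacent_intervals
      (Gsin_intervalIntegrable (lam := lam) hμint le_rfl (by positivity))
      (Gsin_intervalIntegrable (lam := lam) hμint (by positivity)
        (by nlinarith : 2*(M:ℝ)*T ≤ 2*M*T + 2*T))
    have hpair : 0 ≤ ∫ t in (2*M*T)..(2*M*T + 2*T), μ t * Real.sin (lam * t) := by
      rw [pair_eq hμint hlam M]
      refine intervalIntegral.integral_nonneg (by nlinarith) ?_
      intro u hu
      exact h_nonneg_on hμnn hμdec hlam M hu.1 hu.2
    have : ((2:ℝ)*(M+1:ℕ)*T) = 2*M*T + 2*T := by push_cast; ring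
    rw [this, ← hadj]
    linarith

/-- Lemma B : the tail is nonnegative. -/
lemma key_nonneg (hμnn : ∀ s, 0 < s → 0 ≤ μ s) (hμdec : AntitoneOn μ (Set.Ioi 0))
    (hμint : IntegrableOn μ (Set.Ioi 0)) (hlam : 0 < lam) :
    0 ≤ ∫ s in Set.Ioi (0:ℝ), μ s * Real.sin (lam * s) := by
  set T := π / lam with hTdef
  have hT : 0 < T := div_pos Real.pi_pos hlam
  have hU : (⋃ M : ℕ, Set.Ioc (0:ℝ) (2*M*T)) = Set.Ioi 0 := by
    ext x
    simp only [Set.mem_iUnion, Set.mem_Ioc, Set.mem_Ioi]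
    constructor
    · rintro ⟨M, hM, _⟩; exact hM
    · intro hx
      obtain ⟨M, hM⟩ := exists_nat_ge (x / (2*T))
      refine ⟨M, hx, ?_⟩
      have := (div_le_iff₀ (by positivity : (0:ℝ) < 2*T)).mp hM
      nlinarith
  have hmono : Monotone (fun M : ℕ => Set.Ioc (0:ℝ) (2*M*T)) := by
    intro i j hij
    apply Set.Ioc_subset_Ioc_right
    have : (i:ℝ) ≤ j := Nat.cast_le.mpr hij
    nlinarith
  have hGint : IntegrableOn (fun t => μ t * Real.sin (lam * t)) (Set.Ioi 0) :=
    G_integrableOn hμint (subset_refl _)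
  have htend := tendsto_setIntegral_of_monotone
    (fun M : ℕ => measurableSet_Ioc) hmono (by rw [hU]; exact hGint)
  rw [hU] at htend
  refine ge_of_tendsto' htend ?_
  intro M
  rw [← intervalIntegral.integral_of_le (by positivity : (0:ℝ) ≤ 2*M*T)]
  exact fin_nonneg hμnn hμdec hμint hlam M


lemma exists_drop (hμnn : ∀ s, 0 < s → 0 ≤ μ s) (hμdec : AntitoneOn μ (Set.Ioi 0))
    (hμcont : ContinuousOn μ (Set.Ioi 0)) (hμint : IntegrableOn μ (Set.Ioi 0))
    (hμnonnull : ∃ s : ℝ, 0 < s ∧ μ s ≠ 0) (hlam : 0 < lam) :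
    ∃ (k : ℕ) (u : ℝ), u ∈ Set.Ioo (2*k*(π/lam)) (2*k*(π/lam) + (π/lam))
      ∧ μ (u + π/lam) < μ u := by
  set T := π / lam with hTdef
  have hT : 0 < T := div_pos Real.pi_pos hlam
  by_contra hcon
  push_neg at hcon
  have heqB : ∀ (k : ℕ), ∀ t ∈ Set.Ioo (0:ℝ) T,
      μ (2*k*T + t) = μ (2*k*T + T) ∧ μ (2*k*T + T + t) = μ (2*k*T + T) := by
    intro k t ht
    have hk0 : (0:ℝ) ≤ 2*k*T := by positivity
    have hu : 2*k*T + t ∈ Set.Ioo (2*(k:ℝ)*T) (2*k*T + T) :=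
      ⟨by linarith [ht.1], by linarith [ht.2]⟩
    have h1 : μ (2*k*T + t) ≤ μ (2*k*T + t + T) := hcon k _ hu
    have h2 : μ (2*k*T + t + T) ≤ μ (2*k*T + T) :=
      hμdec (by simp only [Set.mem_Ioi]; linarith [ht.1])
        (by simp only [Set.mem_Ioi]; linarith [ht.1]) (by linarith [ht.1])
    have h3 : μ (2*k*T + T) ≤ μ (2*k*T + t) :=
      hμdec (by simp only [Set.mem_Ioi]; linarith [ht.1])
        (by simp only [Set.mem_Ioi]; linarith [ht.1]) (by linarith [ht.2])
    have h4 : 2*(k:ℝ)*T + T + t = 2*k*T + t + T := by ring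
    rw [h4]
    constructor <;> linarith
  have hstep : ∀ k : ℕ, μ (2*((k:ℝ)+1)*T + T) = μ (2*k*T + T) := by
    intro k
    set p := 2*(k:ℝ)*T + 2*T with hpdef
    have hppos : 0 < p := by positivity
    have hc : ContinuousAt μ p := hμcont.continuousAt (Ioi_mem_nhds hppos)
    have h0 : Tendsto (fun n : ℕ => T/((n:ℝ)+2)) atTop (nhds 0) := by
      apply Tendsto.div_atTop tendsto_const_nhds
      exact tendsto_atTop_add_const_right atTop 2 tendsto_natCast_atTop_atTop
    have hbig : ∀ n : ℕ, 0 < T/((n:ℝ)+2) ∧ T/((n:ℝ)+2) < T := by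
      intro n
      constructor
      · positivity
      · apply div_lt_self hT
        have : (0:ℝ) ≤ (n:ℝ) := Nat.cast_nonneg n
        linarith
    have hseq1 : Tendsto (fun n : ℕ => p - T/((n:ℝ)+2)) atTop (nhds p) := by
      simpa using tendsto_const_nhds.sub h0
    have hval1 : ∀ n : ℕ, μ (p - T/((n:ℝ)+2)) = μ (2*k*T + T) := by
      intro n
      obtain ⟨hb1, hb2⟩ := hbig n
      have he : p - T/((n:ℝ)+2) = 2*k*T + T + (T - T/((n:ℝ)+2)) := by rw [hpdef]; ring
      rw [he]
      exact (heqB k _ ⟨by linarith, by linarith⟩).2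
    have hlim1 : μ p = μ (2*k*T + T) := by
      have h1 : Tendsto (fun n : ℕ => μ (p - T/((n:ℝ)+2))) atTop (nhds (μ p)) :=
        hc.tendsto.comp hseq1
      rw [tendsto_congr hval1] at h1
      exact tendsto_nhds_unique h1 tendsto_const_nhds
    have hseq2 : Tendsto (fun n : ℕ => p + T/((n:ℝ)+2)) atTop (nhds p) := by
      simpa using tendsto_const_nhds.add h0
    have hval2 : ∀ n : ℕ, μ (p + T/((n:ℝ)+2)) = μ (2*((k:ℝ)+1)*T + T) := by
      intro n
      obtain ⟨hb1, hb2⟩ := hbig n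
      have he : p + T/((n:ℝ)+2) = 2*((k:ℝ)+1)*T + (T/((n:ℝ)+2)) := by rw [hpdef]; ring
      rw [he]
      have := (heqB (k+1) _ (⟨hb1, hb2⟩ : T/((n:ℝ)+2) ∈ Set.Ioo (0:ℝ) T)).1
      push_cast at this ⊢
      exact this
    have hlim2 : μ p = μ (2*((k:ℝ)+1)*T + T) := by
      have h1 : Tendsto (fun n : ℕ => μ (p + T/((n:ℝ)+2))) atTop (nhds (μ p)) :=
        hc.tendsto.comp hseq2
      rw [tendsto_congr hval2] at h1
      exact tendsto_nhds_unique h1 tendsto_const_nhds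
    rw [← hlim2, hlim1]
  have hconst : ∀ k : ℕ, μ (2*(k:ℝ)*T + T) = μ T := by
    intro k
    induction k with
    | zero => norm_num
    | succ n ih =>
      have := hstep n
      push_cast at this ⊢
      rw [this, ih]
  have hall : ∀ s : ℝ, 0 < s → μ s = μ T := by
    intro s hs
    set k := Nat.floor (s / (2*T)) with hkdef
    clear_value k
    have h2T : (0:ℝ) < 2*T := by linarith
    have hk1 : 2*(k:ℝ)*T ≤ s := by
      have h := Nat.floor_le (le_of_lt (div_pos hs h2T))
      rw [← hkdef] at h
      calc 2*(k:ℝ)*T = (k:ℝ)*(2*T) := by ring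
        _ ≤ (s/(2*T))*(2*T) := by nlinarith
        _ = s := by field_simp
    have hk2 : s < 2*(k:ℝ)*T + 2*T := by
      have h := Nat.lt_floor_add_one (s / (2*T))
      rw [← hkdef] at h
      calc s = (s/(2*T))*(2*T) := by field_simp
        _ < ((k:ℝ)+1)*(2*T) := by nlinarith
        _ = 2*(k:ℝ)*T + 2*T := by ring
    rcases eq_or_lt_of_le hk1 with hc0 | hc0
    · -- s = 2kT exactly; then k ≥ 1
      have hk1' : 1 ≤ k := by
        rcases Nat.eq_zero_or_pos k with h | h
        · exfalso; rw [h] at hc0; push_cast at hc0; linarith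
        · exact h
      obtain ⟨m, rfl⟩ := Nat.exists_eq_add_of_le hk1'
      have hmem : T/2 ∈ Set.Ioo (0:ℝ) T := ⟨by linarith, by linarith⟩
      have ha : μ (s + T/2) = μ T := by
        have h1 := (heqB (1+m) (T/2) hmem).1
        have h2 := hconst (1+m)
        rw [← hc0]
        rw [h1, h2]
      have hb : μ (s - T/2) = μ T := by
        have h1 := (heqB m (T/2) hmem).2
        have h2 := hconst m
        have he : s - T/2 = 2*(m:ℝ)*T + T + T/2 := by
          rw [← hc0]; push_cast; ring
        rw [he, h1, h2]
      have hs1 : (0:ℝ) < s - T/2 := by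
        have : (0:ℝ) ≤ 2*(m:ℝ)*T := by positivity
        have he : s = 2*((1:ℝ)+m)*T := by rw [← hc0]; push_cast; ring
        rw [he]; nlinarith
      have hA : μ s ≤ μ (s - T/2) :=
        hμdec (by simp only [Set.mem_Ioi]; linarith) (by simp only [Set.mem_Ioi]; linarith)
          (by linarith)
      have hB : μ (s + T/2) ≤ μ s :=
        hμdec (by simp only [Set.mem_Ioi]; linarith) (by simp only [Set.mem_Ioi]; linarith)
          (by linarith)
      rw [ha] at hB; rw [hb] at hA
      linarith
    · rcases lt_trichotomy s (2*(k:ℝ)*T + T) with hlt | heqT | hgt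
      · have h1 := (heqB k (s - 2*(k:ℝ)*T) ⟨by linarith, by linarith⟩).1
        rw [show 2*(k:ℝ)*T + (s - 2*(k:ℝ)*T) = s by ring] at h1
        rw [h1, hconst k]
      · rw [heqT, hconst k]
      · have h1 := (heqB k (s - (2*(k:ℝ)*T + T)) ⟨by linarith, by linarith⟩).2
        rw [show 2*(k:ℝ)*T + T + (s - (2*(k:ℝ)*T + T)) = s by ring] at h1
        rw [h1, hconst k]
  obtain ⟨s₀, hs₀, hs₀ne⟩ := hμnonnull
  have hc0 : μ T ≠ 0 := by rw [← hall s₀ hs₀]; exact hs₀ne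
  have hco : IntegrableOn (fun _ : ℝ => μ T) (Set.Ioi (0:ℝ)) :=
    hμint.congr_fun (fun x hx => hall x hx) measurableSet_Ioi
  rw [integrableOn_const_iff] at hco
  rcases hco with h | h
  · exact hc0 (enorm_eq_zero.mp h)
  · rw [Real.volume_Ioi] at h
    exact absurd h (by simp)

lemma key_pos (hμnn : ∀ s, 0 < s → 0 ≤ μ s) (hμdec : AntitoneOn μ (Set.Ioi 0))
    (hμcont : ContinuousOn μ (Set.Ioi 0)) (hμint : IntegrableOn μ (Set.Ioi 0))
    (hμnonnull : ∃ s : ℝ, 0 < s ∧ μ s ≠ 0) (hlam : 0 < lam) :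
    0 < ∫ s in Set.Ioi (0:ℝ), μ s * Real.sin (lam * s) := by
  set T := π / lam with hTdef
  have hT : 0 < T := div_pos Real.pi_pos hlam
  obtain ⟨k, u, hu, hdrop⟩ := exists_drop hμnn hμdec hμcont hμint hμnonnull hlam
  set N := 2*(k:ℝ)*T + 2*T with hNdef
  have hN0 : 0 < N := by positivity
  have hGIoc : IntegrableOn (fun t => μ t * Real.sin (lam * t)) (Set.Ioc 0 N) :=
    G_integrableOn hμint (fun x hx => hx.1)
  have hGIoi : IntegrableOn (fun t => μ t * Real.sin (lam * t)) (Set.Ioi N) :=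
    G_integrableOn hμint (Set.Ioi_subset_Ioi hN0.le)
  have hsplit : (∫ s in Set.Ioi (0:ℝ), μ s * Real.sin (lam * s))
      = (∫ s in Set.Ioc (0:ℝ) N, μ s * Real.sin (lam * s))
        + ∫ s in Set.Ioi N, μ s * Real.sin (lam * s) := by
    rw [← setIntegral_union Set.Ioc_disjoint_Ioi_same measurableSet_Ioi hGIoc hGIoi,
      Set.Ioc_union_Ioi_eq_Ioi hN0.le]
  have hmp := measurePreserving_add_right (volume : Measure ℝ) N
  have hemb := (MeasurableEquiv.addRight N).measurableEmbedding
  have hpre : (fun x : ℝ => x + N) ⁻¹' (Set.Ioi N) = Set.Ioi 0 := by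
    ext x
    simp only [Set.mem_preimage, Set.mem_Ioi]
    constructor <;> intro h <;> linarith
  have hsin : ∀ x : ℝ, Real.sin (lam * (x + N)) = Real.sin (lam * x) := by
    intro x
    have hlT : lam * T = π := lamT hlam
    have hN1 : lam * N = ((k:ℝ)+1)*(2*π) := by
      calc lam*N = 2*(k:ℝ)*(lam*T) + 2*(lam*T) := by rw [hNdef]; ring
        _ = ((k:ℝ)+1)*(2*π) := by rw [hlT]; ring
    have he : lam * (x + N) = lam*x + ((k:ℝ)+1)*(2*π) := by rw [mul_add, hN1]
    rw [he]
    have := Real.sin_add_nat_mul_two_pi (lam*x) (k+1)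
    push_cast at this
    exact this
  have htail : 0 ≤ ∫ s in Set.Ioi N, μ s * Real.sin (lam * s) := by
    have ht1 : (∫ s in Set.Ioi N, μ s * Real.sin (lam * s))
        = ∫ x in Set.Ioi (0:ℝ), μ (x + N) * Real.sin (lam * (x + N)) := by
      rw [← hmp.setIntegral_preimage_emb hemb (fun s => μ s * Real.sin (lam * s)) (Set.Ioi N),
        hpre]
    have ht2 : (∫ x in Set.Ioi (0:ℝ), μ (x + N) * Real.sin (lam * (x + N)))
        = ∫ x in Set.Ioi (0:ℝ), μ (x + N) * Real.sin (lam * x) := by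
      simp_rw [hsin]
    rw [ht1, ht2]
    refine key_nonneg (μ := fun x => μ (x + N)) ?_ ?_ ?_ hlam
    · intro s hs
      exact hμnn _ (by linarith)
    · intro a ha b hb hab
      simp only [Set.mem_Ioi] at ha hb
      exact hμdec (by simp only [Set.mem_Ioi]; linarith) (by simp only [Set.mem_Ioi]; linarith)
        (by linarith)
    · have h1 : IntegrableOn μ (Set.Ioi N) := hμint.mono_set (Set.Ioi_subset_Ioi hN0.le)
      have h2 := (hmp.integrableOn_comp_preimage hemb (f := μ) (s := Set.Ioi N)).mpr h1
      rw [show ((fun x : ℝ => x + N) ⁻¹' (Set.Ioi N)) = Set.Ioi 0 from hpre] at h2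
      exact h2
  have hfin : 0 < ∫ s in Set.Ioc (0:ℝ) N, μ s * Real.sin (lam * s) := by
    rw [← intervalIntegral.integral_of_le hN0.le]
    have hadj := intervalIntegral.integral_add_adjacent_intervals
      (Gsin_intervalIntegrable (lam := lam) hμint le_rfl (by positivity : (0:ℝ) ≤ 2*(k:ℝ)*T))
      (Gsin_intervalIntegrable (lam := lam) hμint (by positivity : (0:ℝ) ≤ 2*(k:ℝ)*T)
        (by nlinarith : 2*(k:ℝ)*T ≤ N))
    rw [hNdef, ← hadj]
    have h1 := fin_nonneg hμnn hμdec hμint hlam k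
    have h2 : 0 < ∫ t in (2*(k:ℝ)*T)..(2*(k:ℝ)*T + 2*T), μ t * Real.sin (lam * t) := by
      rw [pair_eq hμint hlam k]
      rw [intervalIntegral.integral_of_le (by linarith : 2*(k:ℝ)*T ≤ 2*(k:ℝ)*T + T)]
      have hu0 : 0 < u := lt_of_le_of_lt (by positivity : (0:ℝ) ≤ 2*(k:ℝ)*T) hu.1
      refine integral_pos_of_point (u := u) measurableSet_Ioc ?_ ?_ ?_ ?_ ?_
      · rw [← intervalIntegrable_iff_integrableOn_Ioc_of_le (by linarith)]
        exact h_intervalIntegrable hμint (by positivity) (by linarith) hT.le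
      · intro x hx
        exact h_nonneg_on hμnn hμdec hlam k hx.1.le hx.2
      · have hc1 : ContinuousAt μ u := hμcont.continuousAt (Ioi_mem_nhds hu0)
        have hadd : ContinuousAt (fun t : ℝ => t + T) u := (continuous_add_right T).continuousAt
        have hc2 : ContinuousAt (fun t => μ (t + T)) u :=
          ContinuousAt.comp (hμcont.continuousAt
            (Ioi_mem_nhds (by linarith : (0:ℝ) < u + T))) hadd
        exact (hc1.sub hc2).mul
          ((Real.continuous_sin.comp (continuous_const.mul continuous_id)).continuousAt)
      · have hlT : lam * T = π := lamT hlam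
        have hsinpos : 0 < Real.sin (lam * u) := by
          refine sin_pos_shift k ?_ ?_
          · have he : 2*(k:ℝ)*π = lam*(2*(k:ℝ)*T) := by linear_combination (-2*(k:ℝ))*hlT
            rw [he]
            nlinarith [hu.1]
          · have he : lam*(2*(k:ℝ)*T + T) = 2*(k:ℝ)*π + π := by
              linear_combination (2*(k:ℝ)+1)*hlT
            rw [← he]
            nlinarith [hu.2]
        exact mul_pos (sub_pos.mpr hdrop) hsinpos
      · exact Filter.mem_of_superset (isOpen_Ioo.mem_nhds hu) Set.Ioo_subset_Ioc_self
    linarith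
  linarith [hsplit, htail, hfin]


end WithT

end Main

end Stmt6Aux

theorem stmt_6 (μ : ℝ → ℝ)
    (hμnn : ∀ s, 0 < s → 0 ≤ μ s)
    (hμdec : AntitoneOn μ (Set.Ioi 0))
    (hμcont : ContinuousOn μ (Set.Ioi 0))
    (hμint : IntegrableOn μ (Set.Ioi 0))
    (hμnonnull : ∃ s : ℝ, 0 < s ∧ μ s ≠ 0)
    (lam : ℝ) :
    (∫ s in Set.Ioi (0:ℝ), (μ s : ℂ) * Complex.exp (-Complex.I * lam * s)) ≠ 0 := by
  have hint : IntegrableOn (fun s : ℝ => (μ s : ℂ) * Complex.exp (-Complex.I * lam * s))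
      (Set.Ioi 0) := by
    refine Integrable.mono' hμint.abs ?_ ?_
    · exact (Complex.continuous_ofReal.comp_aestronglyMeasurable hμint.1).mul
        ((Complex.continuous_exp.comp (by continuity)).aestronglyMeasurable)
    · filter_upwards with x
      rw [norm_mul]
      have h2 : ‖Complex.exp (-Complex.I * lam * x)‖ = 1 := by
        rw [Complex.norm_exp]
        have : (-Complex.I * (lam:ℂ) * (x:ℂ)).re = 0 := by simp
        rw [this, Real.exp_zero]
      rw [h2, mul_one, Complex.norm_real, Real.norm_eq_abs]
  by_cases hl : lam = 0
  · subst hl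
    simp only [Complex.ofReal_zero, mul_zero, zero_mul, Complex.exp_zero, mul_one]
    have hcoe := Complex.ofRealCLM.integral_comp_comm hμint
    simp only [Complex.ofRealCLM_apply] at hcoe
    rw [hcoe, Ne, Complex.ofReal_eq_zero]
    obtain ⟨s₀, hs₀, hne⟩ := hμnonnull
    have hpos : 0 < μ s₀ := lt_of_le_of_ne (hμnn _ hs₀) (Ne.symm hne)
    have hgt : 0 < ∫ s in Set.Ioi (0:ℝ), μ s := by
      rw [setIntegral_pos_iff_support_of_nonneg_ae
        (Filter.eventually_of_mem (self_mem_ae_restrict measurableSet_Ioi)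
          (fun x hx => hμnn x hx)) hμint]
      refine lt_of_lt_of_le ?_ (measure_mono (?_ : Set.Ioc 0 s₀ ⊆ _))
      · rw [Real.volume_Ioc]
        simp [hs₀]
      · intro x hx
        refine ⟨Function.mem_support.2 (ne_of_gt (lt_of_lt_of_le hpos ?_)), hx.1⟩
        exact hμdec hx.1 hs₀ hx.2
    exact ne_of_gt hgt
  · have him : (∫ s in Set.Ioi (0:ℝ), (μ s : ℂ) * Complex.exp (-Complex.I * lam * s)).im
        = ∫ s in Set.Ioi (0:ℝ), -(μ s * Real.sin (lam * s)) := by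
      have him0 := Complex.imCLM.integral_comp_comm hint
      simp only [Complex.imCLM_apply] at him0
      rw [← him0]
      refine integral_congr_ae (Filter.Eventually.of_forall fun s => ?_)
      simp only
      rw [show -Complex.I * (lam:ℂ) * (s:ℂ) = ((-(lam*s) : ℝ):ℂ) * Complex.I by push_cast; ring]
      rw [Complex.mul_im, Complex.exp_ofReal_mul_I_im, Complex.exp_ofReal_mul_I_re]
      simp [Real.sin_neg]
    have hI : (∫ s in Set.Ioi (0:ℝ), μ s * Real.sin (lam * s)) ≠ 0 := by
      rcases lt_or_gt_of_ne hl with hneg | hpos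
      · have h1 := Stmt6Aux.key_pos hμnn hμdec hμcont hμint hμnonnull
          (by linarith : 0 < -lam)
        have h2 : (∫ s in Set.Ioi (0:ℝ), μ s * Real.sin (lam * s))
            = - ∫ s in Set.Ioi (0:ℝ), μ s * Real.sin (-lam * s) := by
          rw [← integral_neg]
          refine integral_congr_ae (Filter.Eventually.of_forall fun s => ?_)
          simp only
          rw [show lam*s = -(-lam*s) by ring, Real.sin_neg]
          ring
        rw [h2]
        exact neg_ne_zero.mpr (ne_of_gt h1)
      · exact ne_of_gt (Stmt6Aux.key_pos hμnn hμdec hμcont hμint hμnonnull hpos)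
    intro hzero
    rw [hzero] at him
    rw [integral_neg] at him
    simp only [Complex.zero_im] at him
    exact hI (by linarith)
end

section
/- Let κ, ρ1, ρ2, ρ3, b, δ, β > 0 with γ_g := κ − g(0)ρ1/(βρ3) and g(0) > 0, and suppose h_n → 0 is a sequence of nonzero complex numbers with h_n ≠ −ρ3βγ_g/ρ1 for all n. Define A_n = (ρ2κn² − ρ1bn² − ρ1κ)/(ρ1κ²n²) − δ²β/(ρ3κβγ_g + ρ1κh_n). If either (a) γ_g = 0, or (b) γ_g ≠ 0 and χ_g ≠ 0, then n·|A_n| → ∞ as n → ∞. -/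
set_option maxHeartbeats 1000000


open Filter

theorem stmt_12 (κ ρ1 ρ2 ρ3 b δ β g0 : ℝ)
    (hκ : 0 < κ) (hρ1 : 0 < ρ1) (hρ2 : 0 < ρ2) (hρ3 : 0 < ρ3)
    (hb : 0 < b) (hδ : 0 < δ) (hβ : 0 < β) (hg0 : 0 < g0)
    (γ : ℝ) (hγdef : γ = κ - g0 * ρ1 / (β * ρ3))
    (h : ℕ → ℂ) (hh0 : Tendsto h atTop (nhds 0))
    (hhne : ∀ n, h n ≠ 0) (hhne' : ∀ n, h n ≠ -(ρ3 * β * γ / ρ1 : ℝ))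
    (A : ℕ → ℂ)
    (hAdef : ∀ n : ℕ, A n =
      ((ρ2 * κ * (n:ℂ) ^ 2 - ρ1 * b * (n:ℂ) ^ 2 - ρ1 * κ) / (ρ1 * κ ^ 2 * (n:ℂ) ^ 2))
        - (δ:ℂ) ^ 2 * β / ((ρ3 * κ * β * γ : ℝ) + (ρ1 * κ : ℝ) * h n))
    (hcase : γ = 0 ∨ (γ ≠ 0 ∧
      (ρ1 / (ρ3 * κ) - β / g0) * (ρ1 / κ - ρ2 / b)
        - (β / g0) * (ρ1 * δ ^ 2 / (ρ3 * κ * b)) ≠ 0)) :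
    Tendsto (fun n : ℕ => (n : ℝ) * ‖A n‖) atTop atTop := by
  have hκ' : (κ:ℂ) ≠ 0 := Complex.ofReal_ne_zero.mpr hκ.ne'
  have hρ1' : (ρ1:ℂ) ≠ 0 := Complex.ofReal_ne_zero.mpr hρ1.ne'
  -- the first term and its limit
  set T : ℕ → ℂ := fun n =>
    (ρ2 * κ * (n:ℂ) ^ 2 - ρ1 * b * (n:ℂ) ^ 2 - ρ1 * κ) / (ρ1 * κ ^ 2 * (n:ℂ) ^ 2) with hTdef
  set c : ℂ := (((ρ2 * κ - ρ1 * b) / (ρ1 * κ ^ 2) : ℝ) : ℂ) with hcdef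
  have hinvR : Tendsto (fun n : ℕ => ((n:ℝ) ^ 2)⁻¹) atTop (nhds 0) := by
    exact (Filter.tendsto_pow_atTop (two_ne_zero)).comp tendsto_natCast_atTop_atTop
      |>.inv_tendsto_atTop
  have hinvC : Tendsto (fun n : ℕ => ((n:ℂ) ^ 2)⁻¹) atTop (nhds 0) := by
    have := (Complex.continuous_ofReal.tendsto 0).comp hinvR
    have h0 : (Complex.ofReal ∘ fun n : ℕ => ((n:ℝ) ^ 2)⁻¹)
        = fun n : ℕ => ((n:ℂ) ^ 2)⁻¹ := by
      funext n; simp [Function.comp]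
    rw [h0] at this; simpa using this
  have hT : Tendsto T atTop (nhds c) := by
    have heq : ∀ᶠ n : ℕ in atTop, c - (κ:ℂ)⁻¹ * ((n:ℂ) ^ 2)⁻¹ = T n := by
      filter_upwards [eventually_ge_atTop 1] with n hn
      have hn' : (n:ℂ) ≠ 0 := Nat.cast_ne_zero.mpr (by omega)
      simp only [hTdef, hcdef]
      push_cast
      field_simp
    have : Tendsto (fun n : ℕ => c - (κ:ℂ)⁻¹ * ((n:ℂ) ^ 2)⁻¹) atTop (nhds c) := by
      have := tendsto_const_nhds (x := c) (f := atTop (α := ℕ)) |>.sub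
        (hinvC.const_mul (κ:ℂ)⁻¹)
      simpa using this
    exact this.congr' heq
  -- it suffices to bound |A n| below eventually
  suffices hkey : ∃ ε : ℝ, 0 < ε ∧ ∀ᶠ n : ℕ in atTop, ε ≤ ‖A n‖ by
    obtain ⟨ε, hε, hev⟩ := hkey
    have h1 : Tendsto (fun n : ℕ => ε * (n:ℝ)) atTop atTop :=
      (tendsto_natCast_atTop_atTop).const_mul_atTop hε
    refine tendsto_atTop_mono' atTop ?_ h1
    filter_upwards [hev] with n hn
    have hn0 : (0:ℝ) ≤ (n:ℝ) := Nat.cast_nonneg n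
    nlinarith
  rcases hcase with hγ0 | ⟨hγne, hχ⟩
  · -- case (a): γ = 0
    have hAeq : ∀ n : ℕ, A n = T n - (δ:ℂ) ^ 2 * β / ((ρ1 * κ : ℝ) * h n) := by
      intro n
      simp only [hTdef]
      rw [hAdef n, hγ0]
      push_cast
      ring_nf
    have hnorm : Tendsto (fun n => ‖h n‖) atTop (nhdsWithin 0 (Set.Ioi 0)) := by
      refine tendsto_nhdsWithin_of_tendsto_nhds_of_eventually_within _ ?_
        (Eventually.of_forall fun n => ?_)
      · simpa using hh0.norm
      · exact norm_pos_iff.mpr (hhne n)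
    have hbig : Tendsto (fun n => ‖(δ:ℂ) ^ 2 * β / ((ρ1 * κ : ℝ) * h n)‖)
        atTop atTop := by
      have h2 : Tendsto (fun n => (δ ^ 2 * β / (ρ1 * κ)) * (‖h n‖)⁻¹)
          atTop atTop :=
        (hnorm.inv_tendsto_nhdsGT_zero).const_mul_atTop (by positivity)
      refine h2.congr fun n => ?_
      rw [norm_div, norm_mul, norm_mul, norm_pow, Complex.norm_real, Complex.norm_real,
        Complex.norm_real, Real.norm_eq_abs, Real.norm_eq_abs, Real.norm_eq_abs, abs_of_pos hδ, abs_of_pos hβ,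
        abs_of_pos (mul_pos hρ1 hκ)]
      have hab : ‖h n‖ ≠ 0 := by
        simpa using (norm_pos_iff.mpr (hhne n)).ne'
      field_simp
    refine ⟨1, one_pos, ?_⟩
    have hTb : ∀ᶠ n : ℕ in atTop, ‖T n‖ ≤ ‖c‖ + 1 := by
      have := hT.norm.eventually (eventually_le_nhds (lt_add_one ‖c‖))
      simpa using this
    filter_upwards [hTb, hbig.eventually_ge_atTop (‖c‖ + 2)] with n h1 h2
    have h5 : ‖(δ:ℂ) ^ 2 * β / ((ρ1 * κ : ℝ) * h n)‖ - ‖T n‖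
        ≤ ‖A n‖ := by
      rw [hAeq n]
      have := norm_sub_norm_le ((δ:ℂ) ^ 2 * β / ((ρ1 * κ : ℝ) * h n)) (T n)
      rw [norm_sub_rev] at this
      simpa using this
    linarith
  · -- case (b): γ ≠ 0 and χ ≠ 0
    have hden0 : ((ρ3 * κ * β * γ : ℝ) : ℂ) ≠ 0 := by
      refine Complex.ofReal_ne_zero.mpr ?_
      positivity
    have hdlim : Tendsto (fun n : ℕ => (δ:ℂ) ^ 2 * β / ((ρ3 * κ * β * γ : ℝ) + (ρ1 * κ : ℝ) * h n))
        atTop (nhds ((δ:ℂ) ^ 2 * β / ((ρ3 * κ * β * γ : ℝ) : ℂ))) := by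
      have hden : Tendsto (fun n : ℕ => ((ρ3 * κ * β * γ : ℝ) : ℂ) + ((ρ1 * κ : ℝ) : ℂ) * h n)
          atTop (nhds ((ρ3 * κ * β * γ : ℝ) : ℂ)) := by
        have := tendsto_const_nhds (x := ((ρ3 * κ * β * γ : ℝ) : ℂ)) (f := atTop (α := ℕ))
          |>.add (hh0.const_mul (((ρ1 * κ : ℝ)) : ℂ))
        simpa using this
      exact tendsto_const_nhds.div hden hden0
    set L : ℂ := c - (δ:ℂ) ^ 2 * β / ((ρ3 * κ * β * γ : ℝ) : ℂ) with hLdef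
    have hA : Tendsto A atTop (nhds L) := by
      refine (hT.sub hdlim).congr fun n => (hAdef n).symm
    have hLne : L ≠ 0 := by
      have hLreal : L = (((ρ2 * κ - ρ1 * b) / (ρ1 * κ ^ 2)
          - δ ^ 2 * β / (ρ3 * κ * β * γ) : ℝ) : ℂ) := by
        simp only [hLdef, hcdef]
        push_cast
        ring
      rw [hLreal]
      refine Complex.ofReal_ne_zero.mpr ?_
      intro heq
      apply hχ
      have hγ' : g0 * ρ1 = β * ρ3 * (κ - γ) := by
        rw [hγdef]; field_simp; ring
      have hne : ρ1 * κ ^ 2 ≠ 0 := by positivity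
      have hne2 : ρ3 * κ * β * γ ≠ 0 := by
        intro h0
        apply hγne
        have : ρ3 * κ * β ≠ 0 := by positivity
        exact (mul_eq_zero.mp h0).resolve_left this
      rw [sub_eq_zero, div_eq_div_iff hne hne2] at heq
      have hγeq : γ = κ - g0 * ρ1 / (β * ρ3) := hγdef
      have e : ((ρ1 / (ρ3 * κ) - β / g0) * (ρ1 / κ - ρ2 / b)
          - (β / g0) * (ρ1 * δ ^ 2 / (ρ3 * κ * b))) * (g0 * ρ3 * κ ^ 3 * b)
          = κ * (ρ1 * g0 - β * ρ3 * κ) * (ρ1 * b - ρ2 * κ) - β * ρ1 * δ ^ 2 * κ ^ 2 := by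
        field_simp
      have hpos : g0 * ρ3 * κ ^ 3 * b ≠ 0 := by positivity
      have e2 : ((ρ1 / (ρ3 * κ) - β / g0) * (ρ1 / κ - ρ2 / b)
          - (β / g0) * (ρ1 * δ ^ 2 / (ρ3 * κ * b))) * (g0 * ρ3 * κ ^ 3 * b) = 0 := by
        rw [e]
        linear_combination heq + κ * (ρ1 * b - ρ2 * κ) * hγ'
      exact (mul_eq_zero.mp e2).resolve_right hpos
    have habs : Tendsto (fun n => ‖A n‖) atTop (nhds ‖L‖) := by
      simpa using hA.norm
    refine ⟨‖L‖ / 2, half_pos (norm_pos_iff.mpr hLne), ?_⟩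
    exact habs.eventually (eventually_ge_nhds (by
      have := norm_pos_iff.mpr hLne
      linarith))
end

section
/- For μ : (0,∞) → [0,∞) integrable and nonnull, and η ∈ L²((0,∞), μ(s)ds; H₀¹(0,ℓ)) with Dη ∈ L²((0,∞), μ(s)ds; H₀¹(0,ℓ)), lim_{s→0⁺}‖η_x(s)‖ = 0, μ absolutely continuous nonincreasing, and μ(s)‖η_x(s)‖² → 0 as s → ∞: the identity 2⟨Tη, η⟩_M = ∫₀^∞ μ′(s)‖η_x(s)‖² ds = −Γ[η] holds, where Tη = −Dη. In particular ⟨Tη, η⟩_M ≤ 0. -/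
open MeasureTheory

theorem aux_deriv_nonpos (μ : ℝ → ℝ) (hμdec : AntitoneOn μ (Set.Ioi 0))
    {s : ℝ} (hs : 0 < s) : deriv μ s ≤ 0 := by
  by_cases hd : DifferentiableAt ℝ μ s
  · have hder := hd.hasDerivAt
    rw [hasDerivAt_iff_tendsto_slope] at hder
    have h1 : Filter.Tendsto (slope μ s) (nhdsWithin s (Set.Ioi s)) (nhds (deriv μ s)) :=
      hder.mono_left (nhdsWithin_mono s (by intro x hx; exact ne_of_gt hx))
    refine le_of_tendsto h1 ?_
    filter_upwards [self_mem_nhdsWithin] with x hx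
    have hxs : s < x := hx
    have : μ x ≤ μ s := hμdec (Set.mem_Ioi.2 hs) (Set.mem_Ioi.2 (hs.trans hxs)) hxs.le
    have hpos : 0 < x - s := by linarith
    rw [slope_def_field]
    have : μ x - μ s ≤ 0 := by linarith
    exact div_nonpos_of_nonpos_of_nonneg this hpos.le
  · simp [deriv_zero_of_not_differentiableAt hd]

theorem aux_const_int (μ : ℝ → ℝ) {c d k : ℝ} (hconst : ∀ s ∈ Set.Icc c d, μ s = k) :
    IntegrableOn (deriv μ) (Set.Ioc c d) := by
  have hz : ∀ x ∈ Set.Ioo c d, deriv μ x = 0 := by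
    intro x hx
    have hev : μ =ᶠ[nhds x] (fun _ => k) := by
      filter_upwards [Ioo_mem_nhds hx.1 hx.2] with y hy
      exact hconst y ⟨hy.1.le, hy.2.le⟩
    rw [hev.deriv_eq, deriv_const]
  have hae : (deriv μ) =ᵐ[volume.restrict (Set.Ioc c d)] 0 := by
    rw [Filter.EventuallyEq, MeasureTheory.ae_restrict_iff' measurableSet_Ioc]
    have hnd : ∀ᵐ x : ℝ, x ≠ d := by
      rw [MeasureTheory.ae_iff]
      simpa using measure_singleton (μ := (volume : Measure ℝ)) d
    filter_upwards [hnd] with x hxd hx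
    exact hz x ⟨hx.1, lt_of_le_of_ne hx.2 hxd⟩
  exact (integrable_congr hae).2 (integrable_zero _ _ _)

theorem aux_deriv_integrable (μ : ℝ → ℝ) (hμdec : AntitoneOn μ (Set.Ioi 0))
    (hμAC : ∀ s, 0 < s → μ s = μ 1 + ∫ x in (1:ℝ)..s, deriv μ x)
    {a b : ℝ} (ha : 0 < a) (hab : a ≤ b) : IntegrableOn (deriv μ) (Set.Ioc a b) := by
  have claim2a : ∀ b : ℝ, 1 ≤ b → IntegrableOn (deriv μ) (Set.Ioc 1 b) := by
    intro b hb
    by_contra hni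
    have hμb : μ b = μ 1 := by
      have := hμAC b (lt_of_lt_of_le one_pos hb)
      rwa [intervalIntegral.integral_of_le hb, MeasureTheory.integral_undef hni, add_zero] at this
    refine hni (aux_const_int μ (k := μ 1) ?_)
    intro s hs
    have h1 : μ s ≤ μ 1 := hμdec (by norm_num) (Set.mem_Ioi.2 (lt_of_lt_of_le one_pos hs.1)) hs.1
    have h2 : μ b ≤ μ s := hμdec (Set.mem_Ioi.2 (lt_of_lt_of_le one_pos hs.1))
      (Set.mem_Ioi.2 (lt_of_lt_of_le one_pos hb)) hs.2
    linarith [hμb ▸ h2]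
  have claim2b : ∀ a : ℝ, 0 < a → a ≤ 1 → IntegrableOn (deriv μ) (Set.Ioc a 1) := by
    intro a ha ha1
    by_contra hni
    have hμa : μ a = μ 1 := by
      have := hμAC a ha
      rw [intervalIntegral.integral_symm, intervalIntegral.integral_of_le ha1,
        MeasureTheory.integral_undef hni] at this
      simpa using this
    refine hni (aux_const_int μ (k := μ 1) ?_)
    intro s hs
    have hspos : 0 < s := lt_of_lt_of_le ha hs.1
    have h1 : μ s ≤ μ a := hμdec (Set.mem_Ioi.2 ha) (Set.mem_Ioi.2 hspos) hs.1
    have h2 : μ 1 ≤ μ s := hμdec (Set.mem_Ioi.2 hspos) (by norm_num) hs.2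
    linarith [hμa ▸ h1]
  rcases le_total b 1 with hb1 | hb1
  · exact (claim2b a ha (hab.trans hb1)).mono_set (Set.Ioc_subset_Ioc_right hb1)
  rcases le_total 1 a with ha1 | ha1
  · exact (claim2a b hb1).mono_set (Set.Ioc_subset_Ioc_left ha1)
  · have : Set.Ioc a b ⊆ Set.Ioc a 1 ∪ Set.Ioc 1 b := by
      rw [Set.Ioc_union_Ioc_eq_Ioc ha1 hb1]
    exact ((claim2b a ha ha1).union (claim2a b hb1)).mono_set this

theorem aux_ii (μ : ℝ → ℝ) (hμdec : AntitoneOn μ (Set.Ioi 0))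
    (hμAC : ∀ s, 0 < s → μ s = μ 1 + ∫ x in (1:ℝ)..s, deriv μ x)
    {a b : ℝ} (ha : 0 < a) (hb : 0 < b) : IntervalIntegrable (deriv μ) volume a b := by
  rw [intervalIntegrable_iff]
  have h1 : (0:ℝ) < a ⊓ b := lt_min ha hb
  have h2 : a ⊓ b ≤ a ⊔ b := le_trans inf_le_left le_sup_left
  exact aux_deriv_integrable μ hμdec hμAC h1 h2

theorem aux_ftc (μ : ℝ → ℝ) (hμdec : AntitoneOn μ (Set.Ioi 0))
    (hμAC : ∀ s, 0 < s → μ s = μ 1 + ∫ x in (1:ℝ)..s, deriv μ x)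
    {a b : ℝ} (ha : 0 < a) (hb : 0 < b) :
    μ b - μ a = ∫ x in a..b, deriv μ x := by
  have h1 : IntervalIntegrable (deriv μ) volume 1 a := aux_ii μ hμdec hμAC one_pos ha
  have h2 : IntervalIntegrable (deriv μ) volume a b := aux_ii μ hμdec hμAC ha hb
  have := intervalIntegral.integral_add_adjacent_intervals h1 h2
  rw [hμAC a ha, hμAC b hb, ← this]
  ring

theorem aux_ibp {H : Type*} [NormedAddCommGroup H] [InnerProductSpace ℝ H]
    (μ : ℝ → ℝ) (hμdec : AntitoneOn μ (Set.Ioi 0))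
    (hμAC : ∀ s, 0 < s → μ s = μ 1 + ∫ x in (1:ℝ)..s, deriv μ x)
    (η η' : ℝ → H) (hη' : ∀ s, 0 < s → HasDerivAt η (η' s) s)
    (hint1 : IntegrableOn (fun s => μ s * inner ℝ (η' s) (η s) : ℝ → ℝ) (Set.Ioi 0))
    (hint2 : IntegrableOn (fun s => deriv μ s * ‖η s‖ ^ 2) (Set.Ioi 0))
    {a b : ℝ} (ha : 0 < a) (hab : a ≤ b) (hμb : 0 < μ b) :
    ∫ s in Set.Ioc a b, (deriv μ s * ‖η s‖ ^ 2 + 2 * (μ s * inner ℝ (η' s) (η s)))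
      = μ b * ‖η b‖ ^ 2 - μ a * ‖η a‖ ^ 2 := by
  set F : ℝ → ℝ := fun s => ‖η s‖ ^ 2 with hF
  set w : ℝ → ℝ := fun s => 2 * inner ℝ (η' s) (η s) with hw
  set g : ℝ → ℝ := deriv μ with hg
  set ρ : Measure ℝ := volume.restrict (Set.Ioc a b) with hρ
  have hIoc : Set.Ioc a b ⊆ Set.Ioi 0 := fun x hx => lt_trans ha hx.1
  -- derivative of F
  have hF' : ∀ s, 0 < s → HasDerivAt F (w s) s := by
    intro s hs
    have h1 := (hη' s hs).inner ℝ (hη' s hs)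
    have h2 : (fun t => (inner ℝ (η t) (η t) : ℝ)) = F := by
      funext t; rw [real_inner_self_eq_norm_sq]
    rw [h2] at h1
    have hw' : w s = inner ℝ (η s) (η' s) + inner ℝ (η' s) (η s) := by
      rw [hw, real_inner_comm (η' s) (η s)]; ring
    rw [hw']; exact h1
  -- measurability
  have hFc : ContinuousOn F (Set.Ioi 0) := by
    intro x hx
    exact ((hF' x hx).continuousAt).continuousWithinAt
  have hFmeas : AEStronglyMeasurable F ρ :=
    (hFc.mono hIoc).aestronglyMeasurable measurableSet_Ioc
  have hwmeas : AEStronglyMeasurable w ρ := by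
    refine ((stronglyMeasurable_deriv F).aestronglyMeasurable).congr ?_
    rw [Filter.EventuallyEq, ae_restrict_iff' measurableSet_Ioc]
    filter_upwards with x hx
    exact (hF' x (hIoc hx)).deriv
  -- integrability
  have hμwip : IntegrableOn (fun s => μ s * inner ℝ (η' s) (η s) : ℝ → ℝ) (Set.Ioc a b) :=
    hint1.mono_set hIoc
  have hμw : Integrable (fun s => μ s * w s) ρ := by
    have := hμwip.const_mul 2
    refine this.congr (Filter.Eventually.of_forall fun s => ?_)
    rw [hw]; ring
  have hμble : ∀ s ∈ Set.Ioc a b, μ b ≤ μ s := by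
    intro s hs
    exact hμdec (Set.mem_Ioi.2 (hIoc hs)) (Set.mem_Ioi.2 (lt_of_lt_of_le ha hab)) hs.2
  have hwint : Integrable w ρ := by
    refine Integrable.mono' (g := fun s => (2 / μ b) * |μ s * inner ℝ (η' s) (η s)|)
      ((hμwip.abs).const_mul _) hwmeas ?_
    rw [ae_restrict_iff' measurableSet_Ioc]
    filter_upwards with s hs
    have h1 : μ b ≤ μ s := hμble s hs
    have h2 : |μ s * (inner ℝ (η' s) (η s) : ℝ)| = μ s * |(inner ℝ (η' s) (η s) : ℝ)| := by
      rw [abs_mul, abs_of_nonneg (le_trans hμb.le h1)]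
    rw [hw, Real.norm_eq_abs, abs_mul, h2, abs_two]
    rw [div_mul_eq_mul_div, mul_comm (μ s), mul_div_assoc]
    have h3 : |(inner ℝ (η' s) (η s) : ℝ)| ≤ |(inner ℝ (η' s) (η s) : ℝ)| * μ s / μ b := by
      rw [le_div_iff₀ hμb]
      exact mul_le_mul_of_nonneg_left h1 (abs_nonneg _)
    nlinarith [abs_nonneg ((inner ℝ (η' s) (η s) : ℝ))]
  have hgint : Integrable g ρ := aux_deriv_integrable μ hμdec hμAC ha hab
  have hgF : Integrable (fun s => g s * F s) ρ := hint2.mono_set hIoc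
  -- FTC facts
  have hwiiF : ∀ t ∈ Set.Icc a b, ∫ s in t..b, w s = F b - F t := by
    intro t ht
    refine intervalIntegral.integral_eq_sub_of_hasDerivAt (fun x hx => ?_) ?_
    · rw [Set.uIcc_of_le ht.2] at hx
      exact hF' x (lt_of_lt_of_le ha (le_trans ht.1 hx.1))
    · rw [intervalIntegrable_iff_integrableOn_Ioc_of_le ht.2]
      exact MeasureTheory.IntegrableOn.mono_set hwint (Set.Ioc_subset_Ioc_left ht.1)
  -- the kernel
  set K : ℝ × ℝ → ℝ := Set.indicator {p : ℝ × ℝ | p.1 ≤ p.2} (fun p => g p.1 * w p.2) with hK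
  have hKint : Integrable K (ρ.prod ρ) :=
    (Integrable.mul_prod hgint hwint).indicator (measurableSet_le measurable_fst measurable_snd)
  have eq1 : ∀ s ∈ Set.Ioc a b, ∫ t, K (t, s) ∂ρ = (μ s - μ a) * w s := by
    intro s hs
    have h1 : (fun t => K (t, s)) = fun t => (Set.Iic s).indicator g t * w s := by
      funext t
      rw [hK]
      by_cases h : t ≤ s
      · rw [Set.indicator_of_mem (by exact h : (t, s) ∈ {p : ℝ × ℝ | p.1 ≤ p.2}),
          Set.indicator_of_mem (Set.mem_Iic.2 h)]
      · rw [Set.indicator_of_notMem (by exact h : (t, s) ∉ {p : ℝ × ℝ | p.1 ≤ p.2}),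
          Set.indicator_of_notMem (fun hc => h (Set.mem_Iic.1 hc)), zero_mul]
    rw [h1, integral_mul_const, integral_indicator measurableSet_Iic, hρ,
      Measure.restrict_restrict measurableSet_Iic]
    have h2 : Set.Iic s ∩ Set.Ioc a b = Set.Ioc a s := by
      ext t
      simp only [Set.mem_inter_iff, Set.mem_Iic, Set.mem_Ioc]
      exact ⟨fun h => ⟨h.2.1, h.1⟩, fun h => ⟨h.2, h.1, h.2.trans hs.2⟩⟩
    rw [h2, ← intervalIntegral.integral_of_le hs.1.le, ← aux_ftc μ hμdec hμAC ha (hIoc hs)]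
  have eq2 : ∀ t ∈ Set.Ioc a b, ∫ s, K (t, s) ∂ρ = g t * F b - g t * F t := by
    intro t ht
    have h1 : (fun s => K (t, s)) = fun s => g t * (Set.Ici t).indicator w s := by
      funext s
      rw [hK]
      by_cases h : t ≤ s
      · rw [Set.indicator_of_mem (by exact h : (t, s) ∈ {p : ℝ × ℝ | p.1 ≤ p.2}),
          Set.indicator_of_mem (Set.mem_Ici.2 h)]
      · rw [Set.indicator_of_notMem (by exact h : (t, s) ∉ {p : ℝ × ℝ | p.1 ≤ p.2}),
          Set.indicator_of_notMem (fun hc => h (Set.mem_Ici.1 hc)), mul_zero]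
    rw [h1, integral_const_mul, integral_indicator measurableSet_Ici, hρ,
      Measure.restrict_restrict measurableSet_Ici]
    have h2 : Set.Ici t ∩ Set.Ioc a b = Set.Icc t b := by
      ext s
      simp only [Set.mem_inter_iff, Set.mem_Ici, Set.mem_Icc]
      exact ⟨fun h => ⟨h.1, h.2.2⟩, fun h => ⟨h.1, lt_of_lt_of_le ht.1 h.1, h.2⟩⟩
    rw [h2, integral_Icc_eq_integral_Ioc, ← intervalIntegral.integral_of_le ht.2,
      hwiiF t ⟨ht.1.le, ht.2⟩]
    ring
  have hswap : ∫ s, (∫ t, K (t, s) ∂ρ) ∂ρ = ∫ t, (∫ s, K (t, s) ∂ρ) ∂ρ :=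
    (integral_integral_swap (f := fun t s => K (t, s)) hKint).symm
  have eq3 : ∫ s, (∫ t, K (t, s) ∂ρ) ∂ρ = ∫ s, (μ s - μ a) * w s ∂ρ := by
    refine setIntegral_congr_fun measurableSet_Ioc fun s hs => ?_
    exact eq1 s hs
  have eq4 : ∫ t, (∫ s, K (t, s) ∂ρ) ∂ρ = ∫ t, (g t * F b - g t * F t) ∂ρ := by
    refine setIntegral_congr_fun measurableSet_Ioc fun t ht => ?_
    exact eq2 t ht
  have hgtot : ∫ t, g t ∂ρ = μ b - μ a := by
    rw [aux_ftc μ hμdec hμAC ha (lt_of_lt_of_le ha hab),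
      intervalIntegral.integral_of_le hab]
  have eq5 : ∫ t, (g t * F b - g t * F t) ∂ρ = (μ b - μ a) * F b - ∫ t, g t * F t ∂ρ := by
    rw [integral_sub (hgint.mul_const (F b)) hgF, integral_mul_const, hgtot]
  have hwtot : ∫ s, w s ∂ρ = F b - F a := by
    rw [← intervalIntegral.integral_of_le hab]
    exact hwiiF a ⟨le_refl a, hab⟩
  have eq6 : ∫ s, μ s * w s ∂ρ = μ a * (F b - F a) + ((μ b - μ a) * F b - ∫ t, g t * F t ∂ρ) := by
    have h1 : ∫ s, μ s * w s ∂ρ = ∫ s, (μ a * w s + (μ s - μ a) * w s) ∂ρ :=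
      integral_congr_ae (Filter.Eventually.of_forall fun s => by ring)
    have h2 : Integrable (fun s => (μ s - μ a) * w s) ρ := by
      have := hμw.sub (hwint.const_mul (μ a))
      refine this.congr (Filter.Eventually.of_forall fun s => ?_)
      simp only [Pi.sub_apply, hw]; ring
    rw [h1, integral_add (hwint.const_mul (μ a)) h2, integral_const_mul, hwtot, ← eq3, hswap,
      eq4, eq5]
  have hfinal : ∫ s, (g s * F s + 2 * (μ s * inner ℝ (η' s) (η s))) ∂ρ
      = (∫ s, g s * F s ∂ρ) + ∫ s, μ s * w s ∂ρ := by
    rw [← integral_add hgF hμw]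
    exact integral_congr_ae (Filter.Eventually.of_forall fun s => by rw [hw]; ring)
  calc ∫ s in Set.Ioc a b, (deriv μ s * ‖η s‖ ^ 2 + 2 * (μ s * inner ℝ (η' s) (η s)))
      = ∫ s, (g s * F s + 2 * (μ s * inner ℝ (η' s) (η s))) ∂ρ := rfl
    _ = (∫ s, g s * F s ∂ρ) + ∫ s, μ s * w s ∂ρ := hfinal
    _ = μ b * ‖η b‖ ^ 2 - μ a * ‖η a‖ ^ 2 := by rw [eq6]; ring

theorem aux_R {H : Type*} [NormedAddCommGroup H] [InnerProductSpace ℝ H]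
    (μ : ℝ → ℝ)
    (hμnn : ∀ s, 0 < s → 0 ≤ μ s)
    (hμnonnull : ∃ s, 0 < s ∧ μ s ≠ 0)
    (hμdec : AntitoneOn μ (Set.Ioi 0))
    (hμAC : ∀ s, 0 < s → μ s = μ 1 + ∫ x in (1:ℝ)..s, deriv μ x)
    (η η' : ℝ → H)
    (hη' : ∀ s, 0 < s → HasDerivAt η (η' s) s)
    (hηinf : Filter.Tendsto (fun s => μ s * ‖η s‖ ^ 2) Filter.atTop (nhds 0))
    (hint1 : IntegrableOn (fun s => μ s * inner ℝ (η' s) (η s) : ℝ → ℝ) (Set.Ioi 0))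
    (hint2 : IntegrableOn (fun s => deriv μ s * ‖η s‖ ^ 2) (Set.Ioi 0))
    {a : ℝ} (ha : 0 < a) :
    ∫ s in Set.Ioi a, (deriv μ s * ‖η s‖ ^ 2 + 2 * (μ s * inner ℝ (η' s) (η s)))
      = -(μ a * ‖η a‖ ^ 2) := by
  set h : ℝ → ℝ := fun s => deriv μ s * ‖η s‖ ^ 2 + 2 * (μ s * inner ℝ (η' s) (η s)) with hh
  have hhint : IntegrableOn h (Set.Ioi 0) := by
    have := hint2.add (hint1.const_mul 2)
    exact this
  have hhia : IntegrableOn h (Set.Ioi a) :=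
    hhint.mono_set (Set.Ioi_subset_Ioi ha.le)
  by_cases hcase : ∀ s, 0 < s → 0 < μ s
  · -- case A : μ positive everywhere
    have hmono : Monotone (fun n : ℕ => Set.Ioc a (a + n)) := by
      intro m n hmn
      exact Set.Ioc_subset_Ioc_right (by exact_mod_cast add_le_add_right (Nat.cast_le.2 hmn) a)
    have hunion : (⋃ n : ℕ, Set.Ioc a (a + n)) = Set.Ioi a := by
      ext x
      simp only [Set.mem_iUnion, Set.mem_Ioc, Set.mem_Ioi]
      constructor
      · rintro ⟨n, hn, _⟩; exact hn
      · intro hx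
        obtain ⟨n, hn⟩ := exists_nat_ge (x - a)
        exact ⟨n, hx, by linarith⟩
    have T1 : Filter.Tendsto (fun n : ℕ => ∫ s in Set.Ioc a (a + n), h s) Filter.atTop
        (nhds (∫ s in Set.Ioi a, h s)) := by
      have := tendsto_setIntegral_of_monotone (fun n : ℕ => measurableSet_Ioc) hmono
        (hunion ▸ hhia)
      rwa [hunion] at this
    have T2 : ∀ n : ℕ, ∫ s in Set.Ioc a (a + n), h s
        = μ (a + n) * ‖η (a + n)‖ ^ 2 - μ a * ‖η a‖ ^ 2 := by
      intro n
      exact aux_ibp μ hμdec hμAC η η' hη' hint1 hint2 ha (by linarith [Nat.cast_nonneg (α := ℝ) n])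
        (hcase _ (by linarith [Nat.cast_nonneg (α := ℝ) n]))
    have T3 : Filter.Tendsto (fun n : ℕ => μ (a + n) * ‖η (a + n)‖ ^ 2 - μ a * ‖η a‖ ^ 2)
        Filter.atTop (nhds (0 - μ a * ‖η a‖ ^ 2)) := by
      refine Filter.Tendsto.sub_const ?_ _
      exact hηinf.comp (Filter.tendsto_atTop_add_const_left Filter.atTop a
        tendsto_natCast_atTop_atTop)
    rw [show -(μ a * ‖η a‖ ^ 2) = 0 - μ a * ‖η a‖ ^ 2 by ring]
    refine tendsto_nhds_unique ?_ T3
    refine T1.congr fun n => (T2 n) ▸ rfl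
  · -- case B : μ hits zero
    push_neg at hcase
    obtain ⟨z₀, hz₀pos, hz₀⟩ := hcase
    have hz₀0 : μ z₀ = 0 := le_antisymm hz₀ (hμnn z₀ hz₀pos)
    set Z : Set ℝ := {s : ℝ | 0 < s ∧ μ s = 0} with hZ
    have hZne : Z.Nonempty := ⟨z₀, hz₀pos, hz₀0⟩
    have hZbdd : BddBelow Z := ⟨0, fun z hz => hz.1.le⟩
    set T : ℝ := sInf Z with hT
    obtain ⟨s₀, hs₀pos, hs₀ne⟩ := hμnonnull
    have hs₀ : 0 < μ s₀ := lt_of_le_of_ne (hμnn s₀ hs₀pos) (Ne.symm hs₀ne)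
    have hs₀T : s₀ ≤ T := by
      refine le_csInf hZne fun z hz => ?_
      by_contra hlt
      push_neg at hlt
      have := hμdec (Set.mem_Ioi.2 hz.1) (Set.mem_Ioi.2 hs₀pos) hlt.le
      rw [hz.2] at this; linarith
    have hTpos : 0 < T := lt_of_lt_of_le hs₀pos hs₀T
    have hμposlt : ∀ s, 0 < s → s < T → 0 < μ s := by
      intro s hs hsT
      rcases lt_or_eq_of_le (hμnn s hs) with h | h
      · exact h
      · exact absurd (csInf_le hZbdd ⟨hs, h.symm⟩) (not_le.2 hsT)
    have hμ0gt : ∀ s, T < s → μ s = 0 := by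
      intro s hs
      obtain ⟨z, hzZ, hzs⟩ := (csInf_lt_iff hZbdd hZne).1 hs
      refine le_antisymm ?_ (hμnn s (lt_trans hTpos hs))
      · have := hμdec (Set.mem_Ioi.2 hzZ.1) (Set.mem_Ioi.2 (lt_trans hzZ.1 hzs)) hzs.le
        rw [hzZ.2] at this; exact this
    have hspos : ∀ s, T < s → 0 < s := fun s hs => lt_trans hTpos hs
    have hg0 : ∀ s, T < s → deriv μ s = 0 := by
      intro s hs
      have hev : μ =ᶠ[nhds s] (fun _ => (0:ℝ)) := by
        filter_upwards [Ioi_mem_nhds hs] with y hy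
        exact hμ0gt y hy
      rw [hev.deriv_eq, deriv_const]
    have hμT : μ T = 0 := by
      have hftc := aux_ftc μ hμdec hμAC hTpos (by linarith : (0:ℝ) < T + 1)
      rw [intervalIntegral.integral_of_le (by linarith : T ≤ T + 1)] at hftc
      rw [setIntegral_eq_zero_of_forall_eq_zero (fun x hx => hg0 x hx.1)] at hftc
      rw [hμ0gt (T + 1) (by linarith)] at hftc
      linarith
    have hμ0ge : ∀ s, T ≤ s → μ s = 0 := by
      intro s hs
      rcases eq_or_lt_of_le hs with rfl | h
      · exact hμT
      · exact hμ0gt s h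
    rcases le_or_gt T a with hTa | haT
    · -- a ≥ T : everything is zero
      rw [hμ0ge a hTa, zero_mul, neg_zero]
      refine setIntegral_eq_zero_of_forall_eq_zero fun x hx => ?_
      have hxT : T < x := lt_of_le_of_lt hTa hx
      show deriv μ x * ‖η x‖ ^ 2 + 2 * (μ x * inner ℝ (η' x) (η x)) = 0
      rw [hg0 x hxT, hμ0gt x hxT]; ring
    · -- a < T
      set c : ℕ → ℝ := fun n => T - (T - a) / (n + 1) with hc
      have hn1pos : ∀ n : ℕ, (0:ℝ) < n + 1 := fun n => by positivity
      have hca : ∀ n : ℕ, a ≤ c n := by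
        intro n
        have : (T - a) / (n + 1) ≤ T - a := by
          apply div_le_self (by linarith) (by linarith [Nat.cast_nonneg (α := ℝ) n])
        simp only [hc]; linarith
      have hcT : ∀ n : ℕ, c n < T := by
        intro n
        have : (0:ℝ) < (T - a) / (n + 1) := div_pos (by linarith) (hn1pos n)
        simp only [hc]; linarith
      have hcpos : ∀ n : ℕ, 0 < c n := fun n => lt_of_lt_of_le ha (hca n)
      have hmono : Monotone (fun n : ℕ => Set.Ioc a (c n)) := by
        intro m n hmn
        refine Set.Ioc_subset_Ioc_right ?_
        simp only [hc]
        have : (T - a) / (n + 1) ≤ (T - a) / (m + 1) := by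
          apply div_le_div_of_nonneg_left (by linarith) (hn1pos m)
          exact_mod_cast add_le_add_left (Nat.cast_le.2 hmn) 1
        linarith
      have hunion : (⋃ n : ℕ, Set.Ioc a (c n)) = Set.Ioo a T := by
        ext x
        simp only [Set.mem_iUnion, Set.mem_Ioc, Set.mem_Ioo]
        constructor
        · rintro ⟨n, hn1, hn2⟩; exact ⟨hn1, lt_of_le_of_lt hn2 (hcT n)⟩
        · rintro ⟨hx1, hx2⟩
          obtain ⟨n, hn⟩ := exists_nat_ge ((T - a) / (T - x))
          refine ⟨n, hx1, ?_⟩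
          have hTx : (0:ℝ) < T - x := by linarith
          have h1 : (T - a) / (T - x) ≤ (n:ℝ) + 1 := by linarith
          rw [div_le_iff₀ hTx] at h1
          have h2 : (T - a) / (n + 1) ≤ T - x := by
            rw [div_le_iff₀ (hn1pos n)]; linarith
          simp only [hc]; linarith
      have hctend : Filter.Tendsto c Filter.atTop (nhds T) := by
        have h1 : Filter.Tendsto (fun n : ℕ => (T - a) / ((n:ℝ) + 1)) Filter.atTop (nhds 0) := by
          have h2 := (tendsto_const_div_atTop_nhds_zero_nat (T - a)).comp
            (Filter.tendsto_add_atTop_nat 1)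
          refine h2.congr fun n => ?_
          simp only [Function.comp_apply]
          push_cast; ring_nf
        have := Filter.Tendsto.sub (tendsto_const_nhds (x := T) (f := Filter.atTop (α := ℕ))) h1
        rw [sub_zero] at this
        exact this
      have hgIoo : IntegrableOn (deriv μ) (Set.Ioo a T) :=
        (aux_deriv_integrable μ hμdec hμAC ha haT.le).mono_set Set.Ioo_subset_Ioc_self
      have hμctend : Filter.Tendsto (fun n : ℕ => μ (c n)) Filter.atTop (nhds 0) := by
        have T1 : Filter.Tendsto (fun n : ℕ => ∫ s in Set.Ioc a (c n), deriv μ s)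
            Filter.atTop (nhds (∫ s in Set.Ioo a T, deriv μ s)) := by
          have := tendsto_setIntegral_of_monotone (fun n : ℕ => measurableSet_Ioc) hmono
            (hunion ▸ hgIoo)
          rwa [hunion] at this
        have hIoo : ∫ s in Set.Ioo a T, deriv μ s = -μ a := by
          rw [← integral_Ioc_eq_integral_Ioo, ← intervalIntegral.integral_of_le haT.le,
            ← aux_ftc μ hμdec hμAC ha hTpos, hμT]
          ring
        rw [hIoo] at T1
        have heq : ∀ n : ℕ, μ (c n) = μ a + ∫ s in Set.Ioc a (c n), deriv μ s := by
          intro n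
          have := aux_ftc μ hμdec hμAC ha (hcpos n)
          rw [intervalIntegral.integral_of_le (hca n)] at this
          linarith
        have := (tendsto_const_nhds (x := μ a) (f := Filter.atTop (α := ℕ))).add T1
        rw [show μ a + -μ a = 0 by ring] at this
        exact this.congr fun n => (heq n).symm
      have hFtend : Filter.Tendsto (fun n : ℕ => ‖η (c n)‖ ^ 2) Filter.atTop
          (nhds (‖η T‖ ^ 2)) := by
        have hcont : ContinuousAt (fun s => ‖η s‖ ^ 2) T :=
          ((hη' T hTpos).continuousAt.norm).pow 2
        exact hcont.tendsto.comp hctend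
      have hprod : Filter.Tendsto (fun n : ℕ => μ (c n) * ‖η (c n)‖ ^ 2) Filter.atTop
          (nhds 0) := by
        have := hμctend.mul hFtend
        rwa [zero_mul] at this
      have hIoiIoo : ∫ s in Set.Ioi a, h s = ∫ s in Set.Ioo a T, h s := by
        have hsplit : Set.Ioi a = Set.Ioo a T ∪ Set.Ici T := by
          ext x
          simp only [Set.mem_Ioi, Set.mem_union, Set.mem_Ioo, Set.mem_Ici]
          constructor
          · intro hx
            rcases lt_or_ge x T with h1 | h1
            · exact Or.inl ⟨hx, h1⟩
            · exact Or.inr h1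
          · rintro (⟨h1, _⟩ | h1)
            · exact h1
            · linarith
        have hdisj : Disjoint (Set.Ioo a T) (Set.Ici T) := by
          rw [Set.disjoint_left]
          rintro x ⟨_, hx2⟩ hx3
          exact absurd hx3 (not_le.2 hx2)
        have haeIci : h =ᵐ[volume.restrict (Set.Ici T)] 0 := by
          rw [Filter.EventuallyEq, ae_restrict_iff' measurableSet_Ici]
          have hne : ∀ᵐ x : ℝ, x ≠ T := by
            rw [MeasureTheory.ae_iff]
            simpa using measure_singleton (μ := (volume : Measure ℝ)) T
          filter_upwards [hne] with x hxne hx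
          have hxT : T < x := lt_of_le_of_ne hx (Ne.symm hxne)
          show deriv μ x * ‖η x‖ ^ 2 + 2 * (μ x * inner ℝ (η' x) (η x)) = 0
          rw [hg0 x hxT, hμ0gt x hxT]; ring
        have hIciint : IntegrableOn h (Set.Ici T) := (integrable_congr haeIci).2
          (integrable_zero _ _ _)
        have hIooint : IntegrableOn h (Set.Ioo a T) :=
          hhint.mono_set (fun x hx => lt_trans ha hx.1)
        rw [hsplit, setIntegral_union hdisj measurableSet_Ici hIooint hIciint,
          integral_congr_ae haeIci]
        simp
      have T1 : Filter.Tendsto (fun n : ℕ => ∫ s in Set.Ioc a (c n), h s) Filter.atTop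
          (nhds (∫ s in Set.Ioo a T, h s)) := by
        have hIooint : IntegrableOn h (Set.Ioo a T) :=
          hhint.mono_set (fun x hx => lt_trans ha hx.1)
        have := tendsto_setIntegral_of_monotone (fun n : ℕ => measurableSet_Ioc) hmono
          (hunion ▸ hIooint)
        rwa [hunion] at this
      have T2 : ∀ n : ℕ, ∫ s in Set.Ioc a (c n), h s
          = μ (c n) * ‖η (c n)‖ ^ 2 - μ a * ‖η a‖ ^ 2 := fun n =>
        aux_ibp μ hμdec hμAC η η' hη' hint1 hint2 ha (hca n)
          (hμposlt (c n) (hcpos n) (hcT n))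
      have T3 : Filter.Tendsto (fun n : ℕ => μ (c n) * ‖η (c n)‖ ^ 2 - μ a * ‖η a‖ ^ 2)
          Filter.atTop (nhds (0 - μ a * ‖η a‖ ^ 2)) := hprod.sub_const _
      rw [hIoiIoo, show -(μ a * ‖η a‖ ^ 2) = 0 - μ a * ‖η a‖ ^ 2 by ring]
      refine tendsto_nhds_unique ?_ T3
      exact T1.congr fun n => T2 n

theorem aux_cont (h : ℝ → ℝ) (hint : IntegrableOn h (Set.Ioc 0 1)) :
    Filter.Tendsto (fun a => ∫ s in Set.Ioc 0 a, h s) (nhdsWithin 0 (Set.Ioi 0)) (nhds 0) := by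
  have hii : IntervalIntegrable h volume ((0:ℝ) ⊓ 0) ((0:ℝ) ⊔ 1) := by
    have : ((0:ℝ) ⊓ 0) = 0 := by simp
    rw [this, show ((0:ℝ) ⊔ 1) = 1 by simp,
      intervalIntegrable_iff_integrableOn_Ioc_of_le zero_le_one]
    exact hint
  have hcw := intervalIntegral.continuousWithinAt_primitive (b₀ := (0:ℝ)) (b₁ := 0) (b₂ := 1)
    (measure_singleton 0) hii
  have h0 : (∫ x in (0:ℝ)..(0:ℝ), h x) = 0 := intervalIntegral.integral_same
  rw [ContinuousWithinAt, h0] at hcw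
  have hle : nhdsWithin (0:ℝ) (Set.Ioo 0 1) ≤ nhdsWithin 0 (Set.Icc 0 1) :=
    nhdsWithin_mono 0 Set.Ioo_subset_Icc_self
  have h1 : Filter.Tendsto (fun a => ∫ x in (0:ℝ)..a, h x) (nhdsWithin 0 (Set.Ioo 0 1))
      (nhds 0) := hcw.mono_left hle
  rw [nhdsWithin_Ioo_eq_nhdsGT zero_lt_one] at h1
  refine (h1.congr' ?_)
  filter_upwards [self_mem_nhdsWithin] with a hamem
  rw [intervalIntegral.integral_of_le (le_of_lt hamem)]

theorem stmt_18 {H : Type*} [NormedAddCommGroup H] [InnerProductSpace ℝ H]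
    (μ : ℝ → ℝ)
    (hμnn : ∀ s, 0 < s → 0 ≤ μ s)
    (hμint : IntegrableOn μ (Set.Ioi 0))
    (hμnonnull : ∃ s, 0 < s ∧ μ s ≠ 0)
    (hμdec : AntitoneOn μ (Set.Ioi 0))
    (hμAC : ∀ s, 0 < s → μ s = μ 1 + ∫ x in (1:ℝ)..s, deriv μ x)
    (η η' : ℝ → H)
    (hη' : ∀ s, 0 < s → HasDerivAt η (η' s) s)
    (hη0 : Filter.Tendsto (fun s => ‖η s‖) (nhdsWithin 0 (Set.Ioi 0)) (nhds 0))
    (hηinf : Filter.Tendsto (fun s => μ s * ‖η s‖ ^ 2) Filter.atTop (nhds 0))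
    (hint1 : IntegrableOn (fun s => μ s * inner ℝ (η' s) (η s) : ℝ → ℝ) (Set.Ioi 0))
    (hint2 : IntegrableOn (fun s => deriv μ s * ‖η s‖ ^ 2) (Set.Ioi 0)) :
    2 * (∫ s in Set.Ioi (0:ℝ), μ s * (inner ℝ (-η' s) (η s) : ℝ))
        = ∫ s in Set.Ioi (0:ℝ), deriv μ s * ‖η s‖ ^ 2 ∧
    (∫ s in Set.Ioi (0:ℝ), μ s * (inner ℝ (-η' s) (η s) : ℝ)) ≤ 0 := by
  classical
  set h : ℝ → ℝ := fun s => deriv μ s * ‖η s‖ ^ 2 + 2 * (μ s * inner ℝ (η' s) (η s)) with hh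
  have hhint : IntegrableOn h (Set.Ioi 0) := hint2.add (hint1.const_mul 2)
  set I : ℝ := ∫ s in Set.Ioi (0:ℝ), h s with hI
  -- the boundary term tends to -I
  have hsplit : ∀ a : ℝ, 0 < a → I = (∫ s in Set.Ioc 0 a, h s) + ∫ s in Set.Ioi a, h s := by
    intro a ha
    rw [hI, ← Set.Ioc_union_Ioi_eq_Ioi ha.le,
      setIntegral_union (Set.Ioc_disjoint_Ioi le_rfl) measurableSet_Ioi
        (hhint.mono_set Set.Ioc_subset_Ioi_self) (hhint.mono_set (Set.Ioi_subset_Ioi ha.le))]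
  have hKtend : Filter.Tendsto (fun a => μ a * ‖η a‖ ^ 2) (nhdsWithin 0 (Set.Ioi 0))
      (nhds (-I)) := by
    have h1 := aux_cont h (hhint.mono_set Set.Ioc_subset_Ioi_self)
    have h2 : Filter.Tendsto (fun a => (∫ s in Set.Ioc 0 a, h s) - I)
        (nhdsWithin 0 (Set.Ioi 0)) (nhds (-I)) := by
      have := h1.sub_const I
      rwa [zero_sub] at this
    refine h2.congr' ?_
    filter_upwards [self_mem_nhdsWithin] with a hamem
    have ha : 0 < a := hamem
    have := aux_R μ hμnn hμnonnull hμdec hμAC η η' hη' hηinf hint1 hint2 ha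
    rw [← hh] at this
    have h3 := hsplit a ha
    rw [show (∫ s in Set.Ioi a, h s) = -(μ a * ‖η a‖ ^ 2) from this] at h3
    linarith
  -- -I is nonnegative
  have hInonneg : 0 ≤ -I := by
    refine ge_of_tendsto hKtend ?_
    filter_upwards [self_mem_nhdsWithin] with a hamem
    exact mul_nonneg (hμnn a hamem) (pow_nonneg (norm_nonneg _) 2)
  -- key : -I = 0
  have hK0 : -I = 0 := by
    by_contra hKne
    set K : ℝ := -I with hKdef
    have hKpos : 0 < K := lt_of_le_of_ne hInonneg (Ne.symm hKne)
    -- δ₁ : boundary term large below δ₁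
    have hev : ∀ᶠ a in nhdsWithin 0 (Set.Ioi 0), K / 2 < μ a * ‖η a‖ ^ 2 :=
      hKtend.eventually (eventually_gt_nhds (half_lt_self hKpos))
    obtain ⟨δ₁, hδ₁mem, hδ₁⟩ := mem_nhdsGT_iff_exists_Ioo_subset.1 hev
    have hδ₁pos : 0 < δ₁ := hδ₁mem
    -- s₀ : μ positive on (0, s₀]
    obtain ⟨s₀, hs₀pos, hs₀ne⟩ := hμnonnull
    have hs₀ : 0 < μ s₀ := lt_of_le_of_ne (hμnn s₀ hs₀pos) (Ne.symm hs₀ne)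
    have hμpos : ∀ s, 0 < s → s ≤ s₀ → 0 < μ s := by
      intro s hs hss₀
      exact lt_of_lt_of_le hs₀ (hμdec (Set.mem_Ioi.2 hs) (Set.mem_Ioi.2 hs₀pos) hss₀)
    set δ : ℝ := min (δ₁ / 2) s₀ with hδdef
    have hδpos : 0 < δ := lt_min (by linarith) hs₀pos
    have hδδ₁ : δ < δ₁ := lt_of_le_of_lt (min_le_left _ _) (by linarith)
    have hδs₀ : δ ≤ s₀ := min_le_right _ _
    have hbig : ∀ s, 0 < s → s ≤ δ → K / 2 < μ s * ‖η s‖ ^ 2 := by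
      intro s hs hsδ
      exact hδ₁ ⟨hs, lt_of_le_of_lt hsδ hδδ₁⟩
    by_cases hbdd : ∃ M : ℝ, ∀ s, 0 < s → s ≤ δ → μ s ≤ M
    · -- bounded case
      obtain ⟨M, hM⟩ := hbdd
      have hMpos : 0 < M := lt_of_lt_of_le (hμpos δ hδpos hδs₀) (hM δ hδpos le_rfl)
      have hFtend : Filter.Tendsto (fun a => ‖η a‖ ^ 2) (nhdsWithin 0 (Set.Ioi 0))
          (nhds 0) := by
        have := hη0.mul hη0
        rw [mul_zero] at this
        refine this.congr fun a => ?_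
        ring
      have hevF : ∀ᶠ a in nhdsWithin 0 (Set.Ioi 0), ‖η a‖ ^ 2 < K / (2 * M) :=
        hFtend.eventually (eventually_lt_nhds (div_pos hKpos (by positivity)))
      obtain ⟨δ₂, hδ₂mem, hδ₂⟩ := mem_nhdsGT_iff_exists_Ioo_subset.1 hevF
      set a : ℝ := min δ δ₂ / 2 with hadef
      have hapos : 0 < a := by
        have h2 : (0:ℝ) < δ₂ := hδ₂mem
        positivity
      have haδ : a ≤ δ := by
        have := min_le_left δ δ₂; simp only [hadef]; linarith
      have haδ₂ : a < δ₂ := by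
        have := min_le_right δ δ₂
        have h2 : 0 < δ₂ := hδ₂mem
        simp only [hadef]; linarith
      have h1 : K / 2 < μ a * ‖η a‖ ^ 2 := hbig a hapos haδ
      have h2 : ‖η a‖ ^ 2 < K / (2 * M) := hδ₂ ⟨hapos, haδ₂⟩
      have h3 : μ a * ‖η a‖ ^ 2 ≤ M * ‖η a‖ ^ 2 :=
        mul_le_mul_of_nonneg_right (hM a hapos haδ) (pow_nonneg (norm_nonneg _) 2)
      have h4 : M * ‖η a‖ ^ 2 < M * (K / (2 * M)) := by
        exact mul_lt_mul_of_pos_left h2 hMpos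
      rw [show M * (K / (2 * M)) = K / 2 by field_simp] at h4
      linarith
    · -- unbounded case
      push_neg at hbdd
      -- pick δ' ≤ δ with small tail integral of |g F|
      have habs : IntegrableOn (fun s => |deriv μ s * ‖η s‖ ^ 2|) (Set.Ioc 0 1) :=
        (hint2.mono_set Set.Ioc_subset_Ioi_self).abs
      have hcont2 := aux_cont _ habs
      have hevsmall : ∀ᶠ x in nhdsWithin 0 (Set.Ioi 0),
          (∫ s in Set.Ioc 0 x, |deriv μ s * ‖η s‖ ^ 2|) < K / 8 :=
        hcont2.eventually (eventually_lt_nhds (div_pos hKpos (by norm_num)))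
      obtain ⟨δ₂, hδ₂mem, hδ₂⟩ := mem_nhdsGT_iff_exists_Ioo_subset.1 hevsmall
      set δ' : ℝ := min δ (δ₂ / 2) with hδ'def
      have hδ'pos : 0 < δ' := by
        have h2 : (0:ℝ) < δ₂ := hδ₂mem
        exact lt_min hδpos (by positivity)
      have hδ'δ : δ' ≤ δ := min_le_left _ _
      have hδ'δ₂ : δ' < δ₂ := by
        have h2 : 0 < δ₂ := hδ₂mem
        have := min_le_right δ (δ₂ / 2)
        simp only [hδ'def] at *; linarith
      have hsmall : (∫ s in Set.Ioc 0 δ', |deriv μ s * ‖η s‖ ^ 2|) < K / 8 :=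
        hδ₂ ⟨hδ'pos, hδ'δ₂⟩
      have hμδ' : 0 < μ δ' := hμpos δ' hδ'pos (le_trans hδ'δ hδs₀)
      -- pick a with μ a > 2 μ δ'
      obtain ⟨t, ht0, htδ, htM⟩ := hbdd (2 * μ δ')
      have htδ' : t < δ' := by
        by_contra hge
        push_neg at hge
        have := hμdec (Set.mem_Ioi.2 hδ'pos) (Set.mem_Ioi.2 ht0) hge
        linarith
      have hμt : 0 < μ t := by linarith
      -- main contradiction chain
      have hgle : ∀ s, 0 < s → deriv μ s ≤ 0 := fun s hs => aux_deriv_nonpos μ hμdec hs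
      have hboundptwise : ∀ s ∈ Set.Ioc t δ',
          K / (2 * μ t) * (-(deriv μ s)) ≤ (-(deriv μ s)) * ‖η s‖ ^ 2 := by
        intro s hs
        have hspos : 0 < s := lt_trans ht0 hs.1
        have hsδ : s ≤ δ := le_trans hs.2 hδ'δ
        have hμs : 0 < μ s := hμpos s hspos (le_trans hsδ hδs₀)
        have hμst : μ s ≤ μ t := hμdec (Set.mem_Ioi.2 ht0) (Set.mem_Ioi.2 hspos) hs.1.le
        have hFs : K / (2 * μ t) ≤ ‖η s‖ ^ 2 := by
          have h1 : K / 2 < μ s * ‖η s‖ ^ 2 := hbig s hspos hsδ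
          rw [div_le_iff₀ (by positivity)]
          calc K ≤ 2 * (μ s * ‖η s‖ ^ 2) := by linarith
            _ ≤ ‖η s‖ ^ 2 * (2 * μ t) := by nlinarith [pow_nonneg (norm_nonneg (η s)) 2]
        have hgs : 0 ≤ -(deriv μ s) := by linarith [hgle s hspos]
        calc K / (2 * μ t) * (-(deriv μ s)) = (-(deriv μ s)) * (K / (2 * μ t)) := by ring
          _ ≤ (-(deriv μ s)) * ‖η s‖ ^ 2 := mul_le_mul_of_nonneg_left hFs hgs
      have hgint : IntegrableOn (deriv μ) (Set.Ioc t δ') :=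
        aux_deriv_integrable μ hμdec hμAC ht0 htδ'.le
      have hgFint : IntegrableOn (fun s => (-(deriv μ s)) * ‖η s‖ ^ 2) (Set.Ioc t δ') := by
        have h0 := (hint2.mono_set (fun x (hx : x ∈ Set.Ioc t δ') => lt_trans ht0 hx.1)).neg
        refine h0.congr (Filter.Eventually.of_forall fun s => ?_)
        simp only [Pi.neg_apply]
        ring
      have hcint : IntegrableOn (fun s => K / (2 * μ t) * (-(deriv μ s))) (Set.Ioc t δ') := by
        have h0 := hgint.neg.const_mul (K / (2 * μ t))
        refine h0.congr (Filter.Eventually.of_forall fun s => ?_)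
        simp only [Pi.neg_apply]
      have hmono := setIntegral_mono_on hcint hgFint measurableSet_Ioc hboundptwise
      -- compute LHS
      have hftc : μ δ' - μ t = ∫ s in Set.Ioc t δ', deriv μ s := by
        rw [← intervalIntegral.integral_of_le htδ'.le]
        exact aux_ftc μ hμdec hμAC ht0 hδ'pos
      have hLHS : ∫ s in Set.Ioc t δ', K / (2 * μ t) * (-(deriv μ s))
          = K / (2 * μ t) * (μ t - μ δ') := by
        rw [integral_const_mul, integral_neg, ← hftc]; ring
      have hLHSbig : K / 4 ≤ K / (2 * μ t) * (μ t - μ δ') := by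
        have h1 : μ t - μ δ' ≥ μ t / 2 := by linarith
        have h2 : K / (2 * μ t) * (μ t / 2) = K / 4 := by field_simp; ring
        calc K / 4 = K / (2 * μ t) * (μ t / 2) := h2.symm
          _ ≤ K / (2 * μ t) * (μ t - μ δ') :=
            mul_le_mul_of_nonneg_left h1 (by positivity)
      -- RHS small
      have hRHSeq : ∫ s in Set.Ioc t δ', (-(deriv μ s)) * ‖η s‖ ^ 2
          = ∫ s in Set.Ioc t δ', |deriv μ s * ‖η s‖ ^ 2| := by
        refine setIntegral_congr_fun measurableSet_Ioc fun s hs => ?_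
        have hspos : 0 < s := lt_trans ht0 hs.1
        rw [abs_mul, abs_of_nonpos (hgle s hspos), abs_of_nonneg (pow_nonneg (norm_nonneg _) 2)]
      have hRHSle : ∫ s in Set.Ioc t δ', |deriv μ s * ‖η s‖ ^ 2|
          ≤ ∫ s in Set.Ioc 0 δ', |deriv μ s * ‖η s‖ ^ 2| := by
        refine setIntegral_mono_set
          ((hint2.mono_set Set.Ioc_subset_Ioi_self).abs) ?_ ?_
        · filter_upwards with s; exact abs_nonneg _
        · exact Filter.Eventually.of_forall (Set.Ioc_subset_Ioc_left ht0.le)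
      rw [hLHS] at hmono
      rw [hRHSeq] at hmono
      linarith
  -- Now I = 0 ; derive both conclusions
  have hI0 : I = 0 := by linarith
  have hIsum : I = (∫ s in Set.Ioi (0:ℝ), deriv μ s * ‖η s‖ ^ 2)
      + 2 * ∫ s in Set.Ioi (0:ℝ), μ s * inner ℝ (η' s) (η s) := by
    rw [hI, hh, integral_add hint2 (hint1.const_mul 2), integral_const_mul]
  have hneg : (∫ s in Set.Ioi (0:ℝ), μ s * (inner ℝ (-η' s) (η s) : ℝ))
      = -∫ s in Set.Ioi (0:ℝ), (μ s * inner ℝ (η' s) (η s) : ℝ) := by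
    rw [← integral_neg]
    refine integral_congr_ae (Filter.Eventually.of_forall fun s => ?_)
    show (μ s * inner ℝ (-η' s) (η s) : ℝ) = -(μ s * inner ℝ (η' s) (η s))
    rw [inner_neg_left]; ring
  have hgFnonpos : (∫ s in Set.Ioi (0:ℝ), deriv μ s * ‖η s‖ ^ 2) ≤ 0 := by
    refine setIntegral_nonpos measurableSet_Ioi fun s hs => ?_
    exact mul_nonpos_of_nonpos_of_nonneg (aux_deriv_nonpos μ hμdec hs)
      (pow_nonneg (norm_nonneg _) 2)
  constructor
  · rw [hneg]; rw [hI0] at hIsum; linarith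
  · rw [hneg]; rw [hI0] at hIsum; linarith
end
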